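/- Let u^c ∈ [0,1]^{N×T} be continuous controls and u^b ∈ {0,1}^{N×T} the binary controls produced by sum-up rounding with the SOS1 property. Define ε(Δt) = max_{k=1,…,T} |∑_{τ=1}^k (∑_{j=1}^N u^c_{jτ} − 1) Δt|. Then for every time step k = 1,…,T, ‖∑_{τ=1}^k (u^c_τ − u^b_τ) Δt‖_∞ ≤ (N−1) Δt + ((2N−1)/N) ε(Δt). -/

import Mathlib

open Finset

/-- The controller selected by sum-up rounding at time step `k` (0-indexed):
the smallest index `j ∈ {0,…,N-1}` maximizing the cumulative deviation
`p̂_{jk} = ∑_{τ=0}^{k} u^c_{jτ} Δt − ∑_{τ=0}^{k-1} u^b_{jτ} Δt`, where the binary control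
`u^b` at earlier steps is the indicator of the previously selected controllers. -/
noncomputable def surSel (N : ℕ) (Δt : ℝ) (uc : ℕ → ℕ → ℝ) : ℕ → ℕ := fun k =>
  Nat.strongRecOn k (fun n ih =>
    let ub : ℕ → ℕ → ℝ := fun j τ => if h : τ < n then (if ih τ h = j then 1 else 0) else 0
    let phat : ℕ → ℝ := fun j =>
      (∑ τ ∈ Finset.range (n + 1), uc j τ * Δt) - ∑ τ ∈ Finset.range n, ub j τ * Δt
    ((Finset.range N).filter (fun j => ∀ j' ∈ Finset.range N, phat j' ≤ phat j)).min.getD 0)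

/-- The binary controls produced by sum-up rounding. -/
noncomputable def surRound (N : ℕ) (Δt : ℝ) (uc : ℕ → ℕ → ℝ) : ℕ → ℕ → ℝ :=
  fun j k => if surSel N Δt uc k = j then 1 else 0

noncomputable def phatF (N : ℕ) (Δt : ℝ) (uc : ℕ → ℕ → ℝ) (k j : ℕ) : ℝ :=
  (∑ τ ∈ Finset.range (k + 1), uc j τ * Δt) - ∑ τ ∈ Finset.range k, surRound N Δt uc j τ * Δt

lemma surSel_eq (N : ℕ) (Δt : ℝ) (uc : ℕ → ℕ → ℝ) (k : ℕ) :
    surSel N Δt uc k =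
      ((Finset.range N).filter (fun j => ∀ j' ∈ Finset.range N,
        phatF N Δt uc k j' ≤ phatF N Δt uc k j)).min.getD 0 := by
  conv_lhs => rw [surSel]
  rw [Nat.strongRecOn_eq]
  simp only [phatF]
  have key : ∀ j : ℕ, (∑ τ ∈ Finset.range k,
      (if h : τ < k then (if (Nat.strongRecOn τ (fun n ih =>
        let ub : ℕ → ℕ → ℝ := fun j τ => if h : τ < n then (if ih τ h = j then 1 else 0) else 0
        let phat : ℕ → ℝ := fun j =>
          (∑ τ ∈ Finset.range (n + 1), uc j τ * Δt) - ∑ τ ∈ Finset.range n, ub j τ * Δt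
        ((Finset.range N).filter (fun j => ∀ j' ∈ Finset.range N, phat j' ≤ phat j)).min.getD 0) : ℕ) = j then (1:ℝ) else 0) else 0) * Δt)
      = ∑ τ ∈ Finset.range k, surRound N Δt uc j τ * Δt := by
    intro j
    refine Finset.sum_congr rfl fun τ hτ => ?_
    rw [Finset.mem_range] at hτ
    rw [dif_pos hτ]
    rfl
  simp only [key]
  rfl

lemma surSel_spec (N : ℕ) (hN : 0 < N) (Δt : ℝ) (uc : ℕ → ℕ → ℝ) (k : ℕ) :
    surSel N Δt uc k < N ∧
      ∀ j' < N, phatF N Δt uc k j' ≤ phatF N Δt uc k (surSel N Δt uc k) := by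
  obtain ⟨j0, hj0, hmax⟩ := Finset.exists_max_image (Finset.range N) (phatF N Δt uc k)
    ⟨0, Finset.mem_range.mpr hN⟩
  set S := (Finset.range N).filter (fun j => ∀ j' ∈ Finset.range N,
    phatF N Δt uc k j' ≤ phatF N Δt uc k j) with hSdef
  have hS : S.Nonempty := ⟨j0, Finset.mem_filter.mpr ⟨hj0, hmax⟩⟩
  obtain ⟨a, ha⟩ := Finset.min_of_nonempty hS
  have hmem : surSel N Δt uc k ∈ S := by
    rw [surSel_eq, ← hSdef, ha]
    exact Finset.mem_of_min ha
  rw [Finset.mem_filter, Finset.mem_range] at hmem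
  exact ⟨hmem.1, fun j' hj' => hmem.2 j' (Finset.mem_range.mpr hj')⟩

section main

variable (N T : ℕ) (Δt : ℝ) (uc : ℕ → ℕ → ℝ)

noncomputable def thet (k : ℕ) : ℝ :=
  ∑ τ ∈ Finset.range (k + 1), ((∑ j ∈ Finset.range N, uc j τ) - 1) * Δt

noncomputable def Dv (j k : ℕ) : ℝ :=
  ∑ τ ∈ Finset.range (k + 1), (uc j τ - surRound N Δt uc j τ) * Δt

lemma sum_surRound (hN : 0 < N) (τ : ℕ) :
    ∑ j ∈ Finset.range N, surRound N Δt uc j τ = 1 := by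
  unfold surRound
  rw [Finset.sum_ite_eq]
  simp [Finset.mem_range.mpr (surSel_spec N hN Δt uc τ).1]

lemma sum_phat (hN : 0 < N) (k : ℕ) :
    ∑ j ∈ Finset.range N, phatF N Δt uc k j = thet N Δt uc k + Δt := by
  unfold phatF thet
  rw [Finset.sum_sub_distrib, Finset.sum_comm, Finset.sum_comm (s := Finset.range N)]
  have h1 : ∀ τ ∈ Finset.range k, ∑ j ∈ Finset.range N, surRound N Δt uc j τ * Δt = Δt := by
    intro τ _
    rw [← Finset.sum_mul, sum_surRound N Δt uc hN, one_mul]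
  rw [Finset.sum_congr rfl h1, Finset.sum_const, Finset.card_range]
  have h2 : ∀ τ ∈ Finset.range (k+1), ∑ j ∈ Finset.range N, uc j τ * Δt
      = ((∑ j ∈ Finset.range N, uc j τ) - 1) * Δt + Δt := by
    intro τ _
    rw [← Finset.sum_mul]; ring
  rw [Finset.sum_congr rfl h2, Finset.sum_add_distrib, Finset.sum_const, Finset.card_range]
  push_cast
  ring

lemma Dv_eq (j k : ℕ) :
    Dv N Δt uc j k = phatF N Δt uc k j - surRound N Δt uc j k * Δt := by
  unfold Dv phatF
  have h : ∀ τ ∈ Finset.range (k+1), (uc j τ - surRound N Δt uc j τ) * Δt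
      = uc j τ * Δt - surRound N Δt uc j τ * Δt := by intros; ring
  rw [Finset.sum_congr rfl h, Finset.sum_sub_distrib,
    Finset.sum_range_succ (fun τ => surRound N Δt uc j τ * Δt)]
  ring

lemma sum_Dv (hN : 0 < N) (k : ℕ) :
    ∑ j ∈ Finset.range N, Dv N Δt uc j k = thet N Δt uc k := by
  have : ∀ j ∈ Finset.range N, Dv N Δt uc j k
      = phatF N Δt uc k j - surRound N Δt uc j k * Δt := fun j _ => Dv_eq N Δt uc j k
  rw [Finset.sum_congr rfl this, Finset.sum_sub_distrib, sum_phat N Δt uc hN,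
    ← Finset.sum_mul, sum_surRound N Δt uc hN, one_mul]
  ring

lemma Dv_sel (hN : 2 ≤ N) (hΔt : 0 < Δt) (E : ℝ) (m : ℕ)
    (hθ : -E ≤ thet N Δt uc m) :
    -(((N:ℝ) - 1) * Δt + E) / N ≤ Dv N Δt uc (surSel N Δt uc m) m := by
  have hN0 : 0 < N := by omega
  have hNR : (0:ℝ) < N := by exact_mod_cast hN0
  obtain ⟨hlt, hmax⟩ := surSel_spec N hN0 Δt uc m
  set j := surSel N Δt uc m
  have hsum : ∑ i ∈ Finset.range N, phatF N Δt uc m i ≤ N * phatF N Δt uc m j := by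
    have := Finset.sum_le_card_nsmul (Finset.range N) (phatF N Δt uc m)
      (phatF N Δt uc m j) (fun i hi => hmax i (Finset.mem_range.mp hi))
    rwa [Finset.card_range, nsmul_eq_mul] at this
  rw [sum_phat N Δt uc hN0] at hsum
  have hD : Dv N Δt uc j m = phatF N Δt uc m j - Δt := by
    rw [Dv_eq]
    simp [surRound]
    intro h; exact absurd rfl h
  rw [hD, div_le_iff₀ hNR]
  nlinarith [hsum, hθ]

lemma Dv_lower (hN : 2 ≤ N) (hΔt : 0 < Δt) (huc : ∀ j k, 0 ≤ uc j k ∧ uc j k ≤ 1)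
    (E : ℝ) (hE : 0 ≤ E) (k : ℕ) (hθ : ∀ m ≤ k, -E ≤ thet N Δt uc m) :
    ∀ j < N, -(((N:ℝ) - 1) * Δt + E) / N ≤ Dv N Δt uc j k := by
  have hN0 : 0 < N := by omega
  have hNR : (0:ℝ) < N := by exact_mod_cast hN0
  have hN1 : (1:ℝ) ≤ (N:ℝ) := by exact_mod_cast hN0
  have hbnd : -(((N:ℝ) - 1) * Δt + E) / N ≤ 0 := by
    rw [neg_div]
    have : 0 ≤ (((N:ℝ) - 1) * Δt + E) / N := by
      apply div_nonneg _ hNR.le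
      nlinarith
    linarith
  induction k with
  | zero =>
    intro j hj
    by_cases hsel : surSel N Δt uc 0 = j
    · rw [← hsel]; exact Dv_sel N Δt uc hN hΔt E 0 (hθ 0 le_rfl)
    · have : Dv N Δt uc j 0 = uc j 0 * Δt := by
        simp [Dv, surRound, hsel]
      rw [this]
      have := (huc j 0).1
      nlinarith
  | succ k ih =>
    intro j hj
    by_cases hsel : surSel N Δt uc (k+1) = j
    · rw [← hsel]; exact Dv_sel N Δt uc hN hΔt E (k+1) (hθ (k+1) le_rfl)
    · have hstep : Dv N Δt uc j (k+1)
          = Dv N Δt uc j k + (uc j (k+1) - surRound N Δt uc j (k+1)) * Δt := by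
        unfold Dv
        rw [Finset.sum_range_succ]
      have hz : surRound N Δt uc j (k+1) = 0 := by simp [surRound, hsel]
      have hprev := ih (fun m hm => hθ m (le_trans hm (Nat.le_succ k))) j hj
      have := (huc j (k+1)).1
      rw [hstep, hz]
      nlinarith

lemma Dv_upper (hN : 2 ≤ N) (hΔt : 0 < Δt) (huc : ∀ j k, 0 ≤ uc j k ∧ uc j k ≤ 1)
    (E : ℝ) (hE : 0 ≤ E) (k : ℕ) (hθ : ∀ m ≤ k, |thet N Δt uc m| ≤ E) :
    ∀ j < N, Dv N Δt uc j k
      ≤ E + ((N:ℝ) - 1) * ((((N:ℝ) - 1) * Δt + E) / N) := by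
  have hN0 : 0 < N := by omega
  intro j hj
  have hjmem : j ∈ Finset.range N := Finset.mem_range.mpr hj
  have hsplit : Dv N Δt uc j k
      = thet N Δt uc k - ∑ i ∈ (Finset.range N).erase j, Dv N Δt uc i k := by
    rw [← sum_Dv N Δt uc hN0 k, ← Finset.sum_erase_add _ _ hjmem]
    ring
  have hlow := Dv_lower N Δt uc hN hΔt huc E hE k
    (fun m hm => neg_le_of_abs_le (hθ m hm))
  have hcard : ((Finset.range N).erase j).card = N - 1 := by
    rw [Finset.card_erase_of_mem hjmem, Finset.card_range]
  have hsum : ((N:ℝ) - 1) * (-(((N:ℝ) - 1) * Δt + E) / N)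
      ≤ ∑ i ∈ (Finset.range N).erase j, Dv N Δt uc i k := by
    have := Finset.card_nsmul_le_sum ((Finset.range N).erase j)
      (fun i => Dv N Δt uc i k) (-(((N:ℝ) - 1) * Δt + E) / N)
      (fun i hi => hlow i (Finset.mem_range.mp (Finset.mem_of_mem_erase hi)))
    rw [hcard, nsmul_eq_mul] at this
    have hcast : ((N - 1 : ℕ) : ℝ) = (N:ℝ) - 1 := by
      have : (1:ℕ) ≤ N := by omega
      push_cast [this]
      ring
    rwa [hcast] at this
  have habs := abs_le.mp (hθ k le_rfl)
  rw [hsplit]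
  have hneg : ((N:ℝ) - 1) * (-(((N:ℝ) - 1) * Δt + E) / N)
      = -(((N:ℝ) - 1) * ((((N:ℝ) - 1) * Δt + E) / N)) := by ring
  rw [hneg] at hsum
  linarith [hsum, habs.2]


/-- Sum-up rounding approximation bound: for every time step `k`, the max-norm of the
cumulative deviation between the continuous controls `uc` and the rounded controls is at most
`(N−1)Δt + ((2N−1)/N) ε(Δt)`, where `ε(Δt)` is the maximum cumulative SOS1 violation of `uc`. -/
theorem surRound_cumulative_deviation_bound (N T : ℕ) (hN : 2 ≤ N) (hT : 0 < T)
    (Δt : ℝ) (hΔt : 0 < Δt)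
    (uc : ℕ → ℕ → ℝ) (huc : ∀ j k, 0 ≤ uc j k ∧ uc j k ≤ 1) :
    ∀ k < T,
      (Finset.range N).sup' (Finset.nonempty_range_iff.mpr (by omega))
          (fun j => |∑ τ ∈ Finset.range (k + 1), (uc j τ - surRound N Δt uc j τ) * Δt|) ≤
        ((N : ℝ) - 1) * Δt +
          ((2 * (N : ℝ) - 1) / N) *
            (Finset.range T).sup' (Finset.nonempty_range_iff.mpr hT.ne')
              (fun k' => |∑ τ ∈ Finset.range (k' + 1),
                  ((∑ j ∈ Finset.range N, uc j τ) - 1) * Δt|) := by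
  intro k hk
  have hN0 : 0 < N := by omega
  have hNR : (0:ℝ) < N := by exact_mod_cast hN0
  have hN1 : (1:ℝ) ≤ (N:ℝ) := by exact_mod_cast hN0
  set ε := (Finset.range T).sup' (Finset.nonempty_range_iff.mpr hT.ne')
      (fun k' => |∑ τ ∈ Finset.range (k' + 1),
        ((∑ j ∈ Finset.range N, uc j τ) - 1) * Δt|) with hεdef
  have hθabs : ∀ m < T, |thet N Δt uc m| ≤ ε := fun m hm =>
    Finset.le_sup' (fun k' => |∑ τ ∈ Finset.range (k' + 1),
      ((∑ j ∈ Finset.range N, uc j τ) - 1) * Δt|) (Finset.mem_range.mpr hm)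
  have hE : 0 ≤ ε := le_trans (abs_nonneg _) (hθabs 0 hT)
  apply Finset.sup'_le
  intro j hj
  rw [Finset.mem_range] at hj
  have hθk : ∀ m ≤ k, |thet N Δt uc m| ≤ ε := fun m hm => hθabs m (lt_of_le_of_lt hm hk)
  have hup := Dv_upper N Δt uc hN hΔt huc ε hE k hθk j hj
  have hlo := Dv_lower N Δt uc hN hΔt huc ε hE k
    (fun m hm => neg_le_of_abs_le (hθk m hm)) j hj
  have hgoal : (∑ τ ∈ Finset.range (k + 1), (uc j τ - surRound N Δt uc j τ) * Δt)
      = Dv N Δt uc j k := rfl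
  rw [hgoal]
  have hq : ((N:ℝ) - 1) * Δt + (2*(N:ℝ)-1)/(N:ℝ) * ε
      = ((N:ℝ)*((N:ℝ)-1)*Δt + (2*(N:ℝ)-1)*ε)/N := by field_simp
  rw [hq, abs_le]
  constructor
  · have h1 : (((N:ℝ)-1)*Δt + ε)/N ≤ ((N:ℝ)*((N:ℝ)-1)*Δt + (2*(N:ℝ)-1)*ε)/N := by
      gcongr ?_ / _
      nlinarith [mul_nonneg (mul_nonneg (sub_nonneg.mpr hN1) (sub_nonneg.mpr hN1)) hΔt.le,
        mul_nonneg (sub_nonneg.mpr hN1) hE]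
    rw [neg_div] at hlo
    linarith
  · have hupform : ε + ((N:ℝ)-1) * ((((N:ℝ)-1)*Δt + ε)/N)
        = ((N:ℝ)*ε + ((N:ℝ)-1)*(((N:ℝ)-1)*Δt + ε))/N := by field_simp
    rw [hupform] at hup
    have h2 : ((N:ℝ)*ε + ((N:ℝ)-1)*(((N:ℝ)-1)*Δt + ε))/N
        ≤ ((N:ℝ)*((N:ℝ)-1)*Δt + (2*(N:ℝ)-1)*ε)/N := by
      gcongr ?_ / _
      nlinarith [mul_nonneg (sub_nonneg.mpr hN1) hΔt.le]
    linarith
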